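/- Let a, b, c, d be positive real numbers with ε₁a + ε₂b + ε₃c + ε₄d ≠ 0 for every choice of signs εᵢ ∈ {+1, −1}, and such that each of a, b, c, d is less than the sum of the other three. For a nonzero complex number w, there exists a configuration V of Q(a,b,c,d) with R(V) = w if and only if |w| = ac/(bd) and 4a²b² + 4c²d² − (a²+b²−c²−d²)² − 8abcd·(Re w)/|w| ≥ 0. -/

import Mathlib

lemma key_exists (Z : ℂ) (K : ℝ) (h : K ^ 2 ≤ ‖Z‖ ^ 2) :
    ∃ u : ℂ, ‖u‖ = 1 ∧ (Z * u).re = K := by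
  by_cases hZ : Z = 0
  · refine ⟨1, by simp, ?_⟩
    simp only [hZ, norm_zero] at h ⊢
    have : K = 0 := by nlinarith [sq_nonneg K]
    simp [this]
  · have hm : 0 < ‖Z‖ := norm_pos_iff.mpr hZ
    set t : ℝ := Real.sqrt (‖Z‖ ^ 2 - K ^ 2) with ht
    have ht2 : t ^ 2 = ‖Z‖ ^ 2 - K ^ 2 := Real.sq_sqrt (by linarith)
    refine ⟨((K : ℂ) + (t : ℂ) * Complex.I) * (starRingEnd ℂ) Z / ((‖Z‖ : ℂ) ^ 2), ?_, ?_⟩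
    · rw [norm_div, norm_mul, Complex.norm_add_mul_I, Complex.norm_conj]
      rw [norm_pow, Complex.norm_real, Real.norm_eq_abs, abs_of_pos hm]
      rw [show K ^ 2 + t ^ 2 = ‖Z‖ ^ 2 by linarith, Real.sqrt_sq hm.le]
      field_simp
    · have hZZ : (starRingEnd ℂ) Z * Z = ((‖Z‖ : ℂ) ^ 2) := by
        rw [mul_comm, Complex.mul_conj, ← Complex.sq_norm]
        norm_cast
      have hne : ((‖Z‖ : ℂ) ^ 2) ≠ 0 := by
        intro h2
        rw [pow_eq_zero_iff (by norm_num), Complex.ofReal_eq_zero] at h2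
        exact hm.ne' h2
      rw [mul_div_assoc', mul_comm Z, mul_assoc, hZZ, mul_div_assoc, div_self hne, mul_one]
      simp

lemma absZ_sq (x y : ℝ) (v : ℂ) (hv : ‖v‖ = 1) :
    ‖(x:ℂ) - (y:ℂ) * (starRingEnd ℂ) v‖ ^ 2 = x^2 + y^2 - 2*x*y*v.re := by
  have h1 : v.re^2 + v.im^2 = 1 := by
    have := Complex.sq_norm v
    rw [hv, Complex.normSq_apply] at this
    nlinarith [this]
  rw [Complex.sq_norm, Complex.normSq_apply]
  simp [Complex.sub_re, Complex.sub_im, Complex.mul_re, Complex.mul_im,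
    Complex.conj_re, Complex.conj_im, Complex.ofReal_re, Complex.ofReal_im]
  nlinarith [h1]

lemma Zu_re (x y : ℝ) (v u : ℂ) :
    ((((x:ℂ) - (y:ℂ) * (starRingEnd ℂ) v)) * u).re
      = x * u.re - y * (v * (starRingEnd ℂ) u).re := by
  have e3 : ((starRingEnd ℂ) v * u).re = (v * (starRingEnd ℂ) u).re := by
    have := Complex.conj_re (v * (starRingEnd ℂ) u)
    rw [map_mul, Complex.conj_conj] at this
    exact this
  have h5 : ((x:ℂ) - (y:ℂ) * (starRingEnd ℂ) v) * u
      = (x:ℂ)*u - (y:ℂ)*((starRingEnd ℂ) v * u) := by ring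
  rw [h5, Complex.sub_re, Complex.re_ofReal_mul, Complex.re_ofReal_mul, e3]

lemma re_sq_le_abs_sq (z : ℂ) : z.re ^ 2 ≤ ‖z‖ ^ 2 := by
  nlinarith [Complex.abs_re_le_norm z, abs_nonneg z.re, sq_abs z.re,
    norm_nonneg z]

/-- The uniformizer `R(V) = [v₁,v₃;v₂,v₄]` of a planar quadrilateral. -/
noncomputable def uniformizer (v₁ v₂ v₃ v₄ : ℂ) : ℂ :=
  ((v₂ - v₁) / (v₂ - v₃)) * ((v₄ - v₃) / (v₄ - v₁))

/-- A planar configuration of the quadrilateral linkage `Q(a,b,c,d)`. -/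
def IsConfig (a b c d : ℝ) (v₁ v₂ v₃ v₄ : ℂ) : Prop :=
  ‖v₂ - v₁‖ = a ∧ ‖v₃ - v₂‖ = b ∧
  ‖v₄ - v₃‖ = c ∧ ‖v₁ - v₄‖ = d

/-- Non-degeneracy of the linkage `Q(a,b,c,d)`. -/
def NonDeg (a b c d : ℝ) : Prop :=
  ∀ ε₁ ε₂ ε₃ ε₄ : ℝ, (ε₁ = 1 ∨ ε₁ = -1) → (ε₂ = 1 ∨ ε₂ = -1) →
    (ε₃ = 1 ∨ ε₃ = -1) → (ε₄ = 1 ∨ ε₄ = -1) →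
    ε₁ * a + ε₂ * b + ε₃ * c + ε₄ * d ≠ 0

/-- Each side-length is less than the sum of the other three. -/
def StrictQuad (a b c d : ℝ) : Prop :=
  a < b + c + d ∧ b < a + c + d ∧ c < a + b + d ∧ d < a + b + c

set_option maxHeartbeats 1000000 in
theorem stmt_5 (a b c d : ℝ) (ha : 0 < a) (hb : 0 < b) (hc : 0 < c) (hd : 0 < d)
    (hnd : NonDeg a b c d) (hq : StrictQuad a b c d) (w : ℂ) (hw : w ≠ 0) :
    (∃ v₁ v₂ v₃ v₄ : ℂ, IsConfig a b c d v₁ v₂ v₃ v₄ ∧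
        uniformizer v₁ v₂ v₃ v₄ = w) ↔
      (‖w‖ = a * c / (b * d) ∧
        4 * a ^ 2 * b ^ 2 + 4 * c ^ 2 * d ^ 2 - (a ^ 2 + b ^ 2 - c ^ 2 - d ^ 2) ^ 2
          - 8 * a * b * c * d * (w.re / ‖w‖) ≥ 0) := by
  have hs0 : 0 < ‖w‖ := norm_pos_iff.mpr hw
  set s : ℝ := ‖w‖ with hsdef
  set v : ℂ := w / (s : ℂ) with hvdef
  have hsC : (s : ℂ) ≠ 0 := by simpa using hs0.ne'
  have hv1 : ‖v‖ = 1 := by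
    rw [hvdef, norm_div, Complex.norm_real, Real.norm_eq_abs, abs_of_pos hs0]
    exact div_self hs0.ne'
  have hvre : v.re = w.re / s := by rw [hvdef, Complex.div_ofReal_re]
  have hwv : (s : ℂ) * v = w := by rw [hvdef]; field_simp
  have hbC : (b : ℂ) ≠ 0 := Complex.ofReal_ne_zero.mpr hb.ne'
  have hdC : (d : ℂ) ≠ 0 := Complex.ofReal_ne_zero.mpr hd.ne'
  have hbd0 : b * d ≠ 0 := by positivity
  set Z : ℂ := ((a*b : ℝ) : ℂ) - ((c*d : ℝ) : ℂ) * (starRingEnd ℂ) v with hZdef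
  have hZsq : ‖Z‖ ^ 2 = (a*b)^2 + (c*d)^2 - 2*(a*b)*(c*d)*v.re :=
    absZ_sq (a*b) (c*d) v hv1
  constructor
  · rintro ⟨v₁, v₂, v₃, v₄, ⟨h1, h2, h3, h4⟩, hR⟩
    set z₁ : ℂ := v₂ - v₁ with hz₁
    set z₂ : ℂ := v₃ - v₂ with hz₂
    set z₃ : ℂ := v₄ - v₃ with hz₃
    set z₄ : ℂ := v₁ - v₄ with hz₄
    have hz₂0 : z₂ ≠ 0 := by
      intro h; rw [h] at h2; simp at h2; exact hb.ne' h2.symm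
    have hz₄0 : z₄ ≠ 0 := by
      intro h; rw [h] at h4; simp at h4; exact hd.ne' h4.symm
    have hRz : z₁ * z₃ = w * (z₂ * z₄) := by
      have e : uniformizer v₁ v₂ v₃ v₄ = (z₁ / (-z₂)) * (z₃ / (-z₄)) := by
        rw [uniformizer]
        congr 1
        · rw [hz₁, hz₂]; ring_nf
        · rw [hz₃, hz₄]; ring_nf
      rw [e] at hR
      field_simp at hR
      linear_combination hR
    set p : ℂ := z₁ * (starRingEnd ℂ) z₂ with hpdef
    set q : ℂ := z₃ * (starRingEnd ℂ) z₄ with hqdef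
    have hpabs : ‖p‖ = a * b := by
      rw [hpdef, norm_mul, Complex.norm_conj, h1, h2]
    have hqabs : ‖q‖ = c * d := by
      rw [hqdef, norm_mul, Complex.norm_conj, h3, h4]
    have hpq : p * q = w * ((b*d : ℝ) : ℂ)^2 := by
      have e1 : p * q = (z₁ * z₃) * (starRingEnd ℂ) (z₂ * z₄) := by
        rw [hpdef, hqdef, map_mul]; ring
      rw [e1, hRz, mul_assoc, Complex.mul_conj]
      congr 1
      rw [← Complex.ofReal_pow]
      congr 1
      rw [← Complex.sq_norm, norm_mul, h2, h4]
    -- first conjunct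
    have habs : s = a * c / (b * d) := by
      have h0 := congrArg (‖·‖) hpq
      rw [norm_mul, hpabs, hqabs, norm_mul, ← hsdef, norm_pow, Complex.norm_real, Real.norm_eq_abs,
        abs_of_pos (by positivity : (0:ℝ) < b*d)] at h0
      rw [eq_div_iff hbd0]
      refine mul_left_cancel₀ hbd0 ?_
      linear_combination -h0
    refine ⟨habs, ?_⟩
    -- the diagonal relation
    have hdiag : a^2 + b^2 + 2 * p.re = c^2 + d^2 + 2 * q.re := by
      have hsum : z₁ + z₂ = -(z₃ + z₄) := by rw [hz₁, hz₂, hz₃, hz₄]; ring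
      have hns := congrArg Complex.normSq hsum
      rw [Complex.normSq_neg, Complex.normSq_add, Complex.normSq_add] at hns
      rw [← Complex.sq_norm z₁, ← Complex.sq_norm z₂, ← Complex.sq_norm z₃, ← Complex.sq_norm z₄,
        h1, h2, h3, h4] at hns
      rw [← hpdef, ← hqdef] at hns
      linarith [hns]
    have hp0 : p ≠ 0 := by
      intro h; rw [h, norm_zero] at hpabs; nlinarith [hpabs]
    have habC : ((a*b : ℝ) : ℂ) ≠ 0 := Complex.ofReal_ne_zero.mpr (by positivity)
    set u : ℂ := p / ((a*b : ℝ) : ℂ) with hudef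
    have hu1 : ‖u‖ = 1 := by
      rw [hudef, norm_div, hpabs, Complex.norm_real, Real.norm_eq_abs, abs_of_pos (by positivity : (0:ℝ) < a*b)]
      field_simp
    have huu : u * (starRingEnd ℂ) u = 1 := by
      rw [Complex.mul_conj, ← Complex.sq_norm, hu1]; norm_num
    have hpu : p = ((a*b : ℝ) : ℂ) * u := by
      rw [hudef, mul_comm (((a*b : ℝ) : ℂ)), div_mul_cancel₀ p habC]
    have hqu : q = ((c*d : ℝ) : ℂ) * (v * (starRingEnd ℂ) u) := by
      apply mul_right_cancel₀ hp0
      rw [mul_comm q p, hpq]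
      rw [hpu]
      have e2 : ((c*d : ℝ) : ℂ) * (v * (starRingEnd ℂ) u) * (((a*b : ℝ) : ℂ) * u)
          = ((c*d : ℝ) : ℂ) * ((a*b : ℝ) : ℂ) * v * (u * (starRingEnd ℂ) u) := by ring
      rw [e2, huu, mul_one, ← hwv]
      have hreal : s * (b*d)^2 = c*d*(a*b) := by
        rw [habs]; field_simp
      have hrealC : ((s * (b*d)^2 : ℝ) : ℂ) = ((c*d*(a*b) : ℝ) : ℂ) :=
        Complex.ofReal_inj.mpr hreal
      push_cast at hrealC ⊢
      linear_combination v * hrealC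
    have hZu : (Z * u).re = p.re - q.re := by
      rw [hZdef, Zu_re, hpu, hqu, Complex.re_ofReal_mul, Complex.re_ofReal_mul]
    have hle : (p.re - q.re)^2 ≤ ‖Z‖ ^ 2 := by
      rw [← hZu]
      calc (Z*u).re^2 ≤ ‖Z*u‖ ^ 2 := re_sq_le_abs_sq _
        _ = ‖Z‖ ^ 2 := by rw [norm_mul, hu1, mul_one]
    rw [hZsq, hvre] at hle
    have hKval : p.re - q.re = (c^2 + d^2 - a^2 - b^2)/2 := by linarith [hdiag]
    rw [hKval] at hle
    nlinarith [hle]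
  · rintro ⟨habs, hF⟩
    set K : ℝ := (c^2 + d^2 - a^2 - b^2)/2 with hKdef
    have hK : K^2 ≤ ‖Z‖ ^ 2 := by
      rw [hZsq, hvre, hKdef]
      nlinarith [hF]
    obtain ⟨u, hu1, hZu⟩ := key_exists Z K hK
    have huu : u * (starRingEnd ℂ) u = 1 := by
      rw [Complex.mul_conj, ← Complex.sq_norm, hu1]; norm_num
    set p : ℂ := ((a*b : ℝ) : ℂ) * u with hpdef
    set q : ℂ := ((c*d : ℝ) : ℂ) * (v * (starRingEnd ℂ) u) with hqdef
    have hpabs : ‖p‖ = a * b := by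
      rw [hpdef, norm_mul, hu1, Complex.norm_real, Real.norm_eq_abs,
        abs_of_pos (by positivity : (0:ℝ) < a*b), mul_one]
    have hqabs : ‖q‖ = c * d := by
      rw [hqdef, norm_mul, norm_mul, hv1, Complex.norm_conj, hu1, Complex.norm_real, Real.norm_eq_abs,
        abs_of_pos (by positivity : (0:ℝ) < c*d)]
      ring
    have hKeq : p.re - q.re = K := by
      rw [← hZu, hZdef, Zu_re, hpdef, hqdef, Complex.re_ofReal_mul, Complex.re_ofReal_mul]
    set L : ℝ := a^2 + b^2 + 2 * p.re with hLdef
    have hL2 : L = c^2 + d^2 + 2 * q.re := by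
      rw [hLdef]; rw [hKdef] at hKeq; linarith [hKeq]
    have hpre_bd : |p.re| ≤ a * b := hpabs ▸ Complex.abs_re_le_norm p
    have hqre_bd : |q.re| ≤ c * d := hqabs ▸ Complex.abs_re_le_norm q
    have hL0 : 0 < L := by
      rcases lt_or_eq_of_le (show (0:ℝ) ≤ L by
        nlinarith [abs_le.mp hpre_bd, sq_nonneg (a-b), hLdef]) with h | h
      · exact h
      · exfalso
        have h6 : (a-b)^2 = 0 := le_antisymm
          (by nlinarith [abs_le.mp hpre_bd, hLdef]) (sq_nonneg _)
        have h7 : (c-d)^2 = 0 := le_antisymm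
          (by nlinarith [abs_le.mp hqre_bd, hL2]) (sq_nonneg _)
        have hab : a = b := by
          have := (pow_eq_zero_iff (n := 2) (by norm_num)).mp h6
          linarith [this]
        have hcd : c = d := by
          have := (pow_eq_zero_iff (n := 2) (by norm_num)).mp h7
          linarith [this]
        exact hnd 1 (-1) 1 (-1) (Or.inl rfl) (Or.inr rfl) (Or.inl rfl) (Or.inr rfl)
          (by rw [hab, hcd]; ring)
    set z₁ : ℂ := p / (b : ℂ) with hz₁def
    set y₃ : ℂ := q / (d : ℂ) with hy₃def
    have hn1 : Complex.normSq (z₁ + (b:ℂ)) = L := by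
      rw [Complex.normSq_add, hz₁def, Complex.normSq_div, Complex.conj_ofReal,
        div_mul_cancel₀ p hbC]
      rw [← Complex.sq_norm p, ← Complex.sq_norm ((b:ℂ)), hpabs, Complex.norm_real, Real.norm_eq_abs,
        abs_of_pos hb, hLdef]
      field_simp
    have hn2 : Complex.normSq (y₃ + (d:ℂ)) = L := by
      rw [Complex.normSq_add, hy₃def, Complex.normSq_div, Complex.conj_ofReal,
        div_mul_cancel₀ q hdC]
      rw [← Complex.sq_norm q, ← Complex.sq_norm ((d:ℂ)), hqabs, Complex.norm_real, Real.norm_eq_abs,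
        abs_of_pos hd, hL2]
      field_simp
    have hden0 : y₃ + (d:ℂ) ≠ 0 := by
      intro h; rw [h, Complex.normSq_zero] at hn2; exact hL0.ne hn2
    have hnum0 : z₁ + (b:ℂ) ≠ 0 := by
      intro h; rw [h, Complex.normSq_zero] at hn1; exact hL0.ne hn1
    set σ : ℂ := -(z₁ + (b:ℂ)) / (y₃ + (d:ℂ)) with hσdef
    have hσ1 : ‖σ‖ = 1 := by
      rw [hσdef, norm_div, norm_neg, Complex.norm_def, Complex.norm_def, hn1, hn2]
      exact div_self (by positivity)
    have hσ0 : σ ≠ 0 := by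
      intro h; rw [h, norm_zero] at hσ1; norm_num at hσ1
    set z₃ : ℂ := σ * y₃ with hz₃def
    set z₄ : ℂ := σ * (d:ℂ) with hz₄def
    have hsum3 : z₁ + (b:ℂ) + z₃ = -z₄ := by
      have e : σ * (y₃ + (d:ℂ)) = -(z₁ + (b:ℂ)) := by
        rw [hσdef]; field_simp
      rw [hz₃def, hz₄def]
      linear_combination e
    have hz₄0 : z₄ ≠ 0 := mul_ne_zero hσ0 hdC
    refine ⟨0, z₁, z₁ + (b:ℂ), z₁ + (b:ℂ) + z₃, ⟨?_, ?_, ?_, ?_⟩, ?_⟩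
    · rw [sub_zero, hz₁def, norm_div, hpabs, Complex.norm_real, Real.norm_eq_abs, abs_of_pos hb]
      field_simp
    · simp
      linarith
    · have e : z₁ + (b:ℂ) + z₃ - (z₁ + (b:ℂ)) = z₃ := by ring
      rw [e, hz₃def, norm_mul, hσ1, one_mul, hy₃def, norm_div, hqabs,
        Complex.norm_real, Real.norm_eq_abs, abs_of_pos hd]
      field_simp
    · have e : (0:ℂ) - (z₁ + (b:ℂ) + z₃) = z₄ := by rw [zero_sub, hsum3]; ring
      rw [e, hz₄def, norm_mul, hσ1, one_mul, Complex.norm_real, Real.norm_eq_abs, abs_of_pos hd]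
    · rw [uniformizer]
      have e1 : z₁ - 0 = z₁ := by ring
      have e2 : z₁ - (z₁ + (b:ℂ)) = -(b:ℂ) := by ring
      have e3 : z₁ + (b:ℂ) + z₃ - (z₁ + (b:ℂ)) = z₃ := by ring
      have e4 : z₁ + (b:ℂ) + z₃ - 0 = -z₄ := by rw [sub_zero]; exact hsum3
      rw [e1, e2, e3, e4]
      have hpq : p * q = ((a*b*(c*d) : ℝ) : ℂ) * v := by
        rw [hpdef, hqdef]
        push_cast
        linear_combination ((a:ℂ)*b*(c*d)*v) * huu
      have key : z₁ / (-(b:ℂ)) * (z₃ / (-z₄)) = p * q / ((b:ℂ)^2 * (d:ℂ)^2) := by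
        rw [hz₁def, hz₃def, hz₄def, hy₃def]
        field_simp
      rw [key, hpq, ← hwv]
      rw [div_eq_iff (by exact mul_ne_zero (pow_ne_zero 2 hbC) (pow_ne_zero 2 hdC))]
      have hreal : a*b*(c*d) = s * (b^2*d^2) := by
        rw [habs]; field_simp
      have hrealC : ((a*b*(c*d) : ℝ) : ℂ) = ((s * (b^2*d^2) : ℝ) : ℂ) :=
        Complex.ofReal_inj.mpr hreal
      push_cast at hrealC ⊢
      linear_combination v * hrealC
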